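/- Let A be an associative unital algebra over ℂ, q ∈ ℂ nonzero, I a finite index set, and (a_{ij}) a simply-laced Cartan matrix on I (a_{ii} = 2, a_{ij} = a_{ji} ∈ {0, −1} for i ≠ j). Suppose E_i, F_i ∈ A and invertible K_i ∈ A satisfy K_iK_j = K_jK_i, K_iE_j = q^{a_{ij}}E_jK_i, and K_iF_j = q^{−a_{ij}}F_jK_i for all i, j ∈ I. Let n : I → {0,1} satisfy n_i + n_j = 1 whenever a_{ij} = −1, and set 𝔮_i := q² if n_i = 1 and q^{−2} if n_i = 0, 𝐄_i := q^{n_i}E_iK_i^{n_i}, 𝐅_i := q^{1−n_i}F_iK_i^{n_i−1}, 𝐊_i := K_i² if n_i = 1 and K_i^{−2} if n_i = 0. Then for all i, j ∈ I: 𝐊_i𝐄_j = 𝔮_i^{a_{ij}}𝐄_j𝐊_i and 𝐊_i𝐅_j = 𝔮_i^{−a_{ij}}𝐅_j𝐊_i. -/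

import Mathlib

private lemma key_comm {A : Type*} [Ring A] [Algebra ℂ A] (q : ℂ) (hq : q ≠ 0)
    (K : Aˣ) (x : A) (c : ℤ) (h : (K : A) * x = q ^ c • (x * (K : A))) :
    ∀ m : ℤ, ((K ^ m : Aˣ) : A) * x = q ^ (m * c) • (x * ((K ^ m : Aˣ) : A)) := by
  have hinv : ((K⁻¹ : Aˣ) : A) * x = q ^ (-c) • (x * ((K⁻¹ : Aˣ) : A)) := by
    have h1 : x * ((K⁻¹ : Aˣ) : A) = q ^ c • (((K⁻¹ : Aˣ) : A) * x) := by
      calc x * ((K⁻¹ : Aˣ) : A)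
          = ((K⁻¹ : Aˣ) : A) * ((K : A) * x) * ((K⁻¹ : Aˣ) : A) := by
            rw [← mul_assoc, Units.inv_mul, one_mul]
        _ = ((K⁻¹ : Aˣ) : A) * (q ^ c • (x * (K : A))) * ((K⁻¹ : Aˣ) : A) := by rw [h]
        _ = q ^ c • (((K⁻¹ : Aˣ) : A) * x) := by
            rw [mul_smul_comm, smul_mul_assoc, mul_assoc, mul_assoc, Units.mul_inv, mul_one]
    rw [h1, smul_smul, ← zpow_add₀ hq]
    simp
  intro m
  induction m using Int.induction_on with
  | zero => simp
  | succ k ih =>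
      have hco : ((K ^ ((k : ℤ) + 1) : Aˣ) : A) = ((K ^ (k : ℤ) : Aˣ) : A) * (K : A) := by
        rw [zpow_add_one]; norm_cast
      rw [hco, mul_assoc, h, mul_smul_comm, ← mul_assoc, ih, smul_mul_assoc, smul_smul,
        ← zpow_add₀ hq, mul_assoc]
      congr 2
      ring
  | pred k ih =>
      have hco : ((K ^ (-(k : ℤ) - 1) : Aˣ) : A) = ((K ^ (-(k : ℤ)) : Aˣ) : A) * ((K⁻¹ : Aˣ) : A) := by
        rw [zpow_sub_one]; norm_cast
      rw [hco, mul_assoc, hinv, mul_smul_comm, ← mul_assoc, ih, smul_mul_assoc, smul_smul,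
        ← zpow_add₀ hq, mul_assoc]
      congr 2
      ring

/-- Relations (10.3) and (10.4) of the paper for the modified quantum group
`𝐔_𝔮(g_ℝ)`: given generators `E_i, F_i` and invertible `K_i` (encoded as units)
of an algebra over `ℂ` satisfying the standard quantum group `K`-relations for a
simply-laced Cartan matrix `(a_{ij})`, and an alternating weight assignment
`n : I → {0,1}`, the modified generators
`𝐄_i = q^{n_i}E_iK_i^{n_i}`, `𝐅_i = q^{1−n_i}F_iK_i^{n_i−1}`,
`𝐊_i = K_i^{±2}` satisfy `𝐊_i𝐄_j = 𝔮_i^{a_{ij}}𝐄_j𝐊_i` and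
`𝐊_i𝐅_j = 𝔮_i^{−a_{ij}}𝐅_j𝐊_i`, where `𝔮_i = q^{±2}` according to `n_i`. -/
theorem modified_quantum_group_K_relations
    (A : Type*) [Ring A] [Algebra ℂ A] (q : ℂ) (hq : q ≠ 0)
    (I : Type*) [Fintype I] (a : I → I → ℤ)
    (hdiag : ∀ i, a i i = 2)
    (hsymm : ∀ i j, i ≠ j → a i j = a j i)
    (hoff : ∀ i j, i ≠ j → a i j = 0 ∨ a i j = -1)
    (E F : I → A) (K : I → Aˣ)
    (hKK : ∀ i j, K i * K j = K j * K i)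
    (hKE : ∀ i j, (K i : A) * E j = q ^ (a i j) • (E j * (K i : A)))
    (hKF : ∀ i j, (K i : A) * F j = q ^ (-(a i j)) • (F j * (K i : A)))
    (n : I → ℕ) (hn : ∀ i, n i = 0 ∨ n i = 1)
    (halt : ∀ i j, a i j = -1 → n i + n j = 1) :
    ∀ i j : I,
      (let 𝔮 : I → ℂ := fun k => if n k = 1 then q ^ (2 : ℤ) else q ^ (-2 : ℤ)
       let bE : I → A := fun k => q ^ (n k) • (E k * (K k : A) ^ (n k))
       let bF : I → A := fun k =>
         q ^ (1 - n k) • (F k * ((K k ^ ((n k : ℤ) - 1) : Aˣ) : A))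
       let bK : I → A := fun k =>
         ((K k ^ (if n k = 1 then (2 : ℤ) else -2) : Aˣ) : A)
       bK i * bE j = 𝔮 i ^ (a i j) • (bE j * bK i) ∧
         bK i * bF j = 𝔮 i ^ (-(a i j)) • (bF j * bK i)) := by
  intro i j
  dsimp only
  set m : ℤ := if n i = 1 then (2 : ℤ) else -2 with hm
  have hcomm : Commute (K i) (K j) := hKK i j
  have hq1 : (if n i = 1 then q ^ (2 : ℤ) else q ^ (-2 : ℤ)) = q ^ m := by
    rw [hm]; split <;> rfl
  simp only [hq1]
  have hE := key_comm q hq (K i) (E j) (a i j) (hKE i j) m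
  have hF := key_comm q hq (K i) (F j) (-(a i j)) (hKF i j) m
  -- commutation of the K-unit powers
  have hcE : ((K i ^ m : Aˣ) : A) * ((K j : A) ^ (n j)) =
      ((K j : A) ^ (n j)) * ((K i ^ m : Aˣ) : A) := by
    have := ((hcomm.zpow_left m).pow_right (n j)).eq
    exact_mod_cast congrArg (Units.val) this
  have hcF : ((K i ^ m : Aˣ) : A) * ((K j ^ ((n j : ℤ) - 1) : Aˣ) : A) =
      ((K j ^ ((n j : ℤ) - 1) : Aˣ) : A) * ((K i ^ m : Aˣ) : A) := by
    exact_mod_cast congrArg (Units.val) (hcomm.zpow_zpow m ((n j : ℤ) - 1)).eq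
  constructor
  · rw [mul_smul_comm, ← mul_assoc, hE, smul_mul_assoc, smul_comm, mul_assoc, hcE,
      ← mul_assoc, ← zpow_mul, smul_mul_assoc]
  · rw [mul_smul_comm, ← mul_assoc, hF, smul_mul_assoc, smul_comm, mul_assoc, hcF,
      ← mul_assoc, ← zpow_mul, mul_neg, smul_mul_assoc]
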